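/- A simple connected graph G on n ≥ 2 vertices has exactly two distinct signless Laplacian eigenvalues if and only if G is isomorphic to the complete graph K_n. -/

import Mathlib

open Finset Matrix BigOperators

/-- The signless Laplacian matrix `Q(G) = D(G) + A(G)` of a simple graph, over `ℝ`. -/
noncomputable def signlessLaplacian {V : Type*} [Fintype V] [DecidableEq V]
    (G : SimpleGraph V) [DecidableRel G.Adj] : Matrix V V ℝ :=
  Matrix.diagonal (fun v => (G.degree v : ℝ)) + G.adjMatrix ℝ

lemma signlessLaplacian_isHermitian {V : Type*} [Fintype V] [DecidableEq V]
    (G : SimpleGraph V) [DecidableRel G.Adj] : (signlessLaplacian G).IsHermitian := by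
  unfold signlessLaplacian
  apply Matrix.IsHermitian.add
  · exact Matrix.isHermitian_diagonal _
  · rw [Matrix.IsHermitian, conjTranspose_eq_transpose_of_trivial]
    exact G.isSymm_adjMatrix

/-- The signless Laplacian eigenvalues of `G` (as a function on the vertex index type). -/
noncomputable def qEig {V : Type*} [Fintype V] [DecidableEq V]
    (G : SimpleGraph V) [DecidableRel G.Adj] : V → ℝ :=
  (signlessLaplacian_isHermitian G).eigenvalues

section Helpers
variable {V : Type*} [Fintype V] [DecidableEq V] {A : Matrix V V ℝ} (hA : A.IsHermitian)

lemma conj_quad (a b : ℝ) :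
    star (hA.eigenvectorUnitary : Matrix V V ℝ) * ((A - a • 1) * (A - b • 1)) *
      (hA.eigenvectorUnitary : Matrix V V ℝ) =
    Matrix.diagonal (fun i => (hA.eigenvalues i - a) * (hA.eigenvalues i - b)) := by
  set U := (hA.eigenvectorUnitary : Matrix V V ℝ) with hUdef
  have hU1 : star U * U = 1 := by
    rw [hUdef]
    exact Unitary.coe_star_mul_self _
  have hU2 : U * star U = 1 := by
    rw [hUdef]
    exact Unitary.coe_mul_star_self _
  have hD : star U * A * U = Matrix.diagonal hA.eigenvalues := by
    have h := hA.conjStarAlgAut_star_eigenvectorUnitary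
    rw [Unitary.conjStarAlgAut_star_apply] at h
    exact h
  have h1 : ∀ c : ℝ, star U * (A - c • 1) * U
      = Matrix.diagonal hA.eigenvalues - Matrix.diagonal (fun _ => c) := by
    intro c
    rw [Matrix.mul_sub, Matrix.sub_mul, hD]
    congr 1
    rw [Matrix.mul_smul, Matrix.smul_mul, mul_one, hU1, smul_eq_diagonal_mul]
    simp [Matrix.diagonal_mul_diagonal]
  have key : star U * ((A - a • 1) * (A - b • 1)) * U
      = (star U * (A - a • 1) * U) * (star U * (A - b • 1) * U) := by
    have : (A - a • 1) * (A - b • 1) = (A - a • 1) * (U * star U) * (A - b • 1) := by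
      rw [hU2, Matrix.mul_one]
    rw [this]
    noncomm_ring
  rw [key, h1, h1, Matrix.diagonal_sub, Matrix.diagonal_sub, Matrix.diagonal_mul_diagonal]

lemma quad_eq_zero (a b : ℝ) (h : ∀ i, (hA.eigenvalues i - a) * (hA.eigenvalues i - b) = 0) :
    (A - a • 1) * (A - b • 1) = 0 := by
  set U := (hA.eigenvectorUnitary : Matrix V V ℝ) with hUdef
  have hU1 : star U * U = 1 := Unitary.coe_star_mul_self _
  have hU2 : U * star U = 1 := Unitary.coe_mul_star_self _
  have key := conj_quad hA a b
  have hd : Matrix.diagonal (fun i => (hA.eigenvalues i - a) * (hA.eigenvalues i - b))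
      = (0 : Matrix V V ℝ) := by
    rw [show (fun i => (hA.eigenvalues i - a) * (hA.eigenvalues i - b)) = fun _ => (0:ℝ) from
      funext h, Matrix.diagonal_zero]
  rw [hd] at key
  calc (A - a • 1) * (A - b • 1)
      = U * (star U * ((A - a • 1) * (A - b • 1)) * U) * star U := by
        rw [← Matrix.mul_assoc, ← Matrix.mul_assoc, hU2, Matrix.one_mul, Matrix.mul_assoc,
          Matrix.mul_assoc, hU2, Matrix.mul_one]
    _ = 0 := by rw [key]; simp

lemma eig_root (a b : ℝ) (h : (A - a • 1) * (A - b • 1) = 0) (i : V) :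
    (hA.eigenvalues i - a) * (hA.eigenvalues i - b) = 0 := by
  have key := conj_quad hA a b
  rw [h] at key
  simp only [Matrix.mul_zero, Matrix.zero_mul] at key
  have := congr_fun (congr_fun key.symm i) i
  simpa using this

lemma trace_eq_sum_eig : A.trace = ∑ i, hA.eigenvalues i := by
  conv_lhs => rw [hA.spectral_theorem]
  rw [Unitary.conjStarAlgAut_apply, Matrix.trace_mul_comm, ← Matrix.mul_assoc, Unitary.coe_star_mul_self, Matrix.one_mul]
  simp [Matrix.trace_diagonal]

end Helpers

lemma Q_apply {V : Type*} [Fintype V] [DecidableEq V]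
    (G : SimpleGraph V) [DecidableRel G.Adj] (u v : V) : signlessLaplacian G u v =
    (if u = v then (G.degree u : ℝ) else 0) + (if G.Adj u v then 1 else 0) := by
  simp [signlessLaplacian, Matrix.add_apply, Matrix.diagonal_apply]

lemma Q_nonneg {V : Type*} [Fintype V] [DecidableEq V]
    (G : SimpleGraph V) [DecidableRel G.Adj] (u v : V) : 0 ≤ signlessLaplacian G u v := by
  rw [Q_apply]
  split_ifs <;> positivity

/-- A simple connected graph on `n ≥ 2` vertices has exactly two distinct signless
Laplacian eigenvalues if and only if it is the complete graph `K_n`. -/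
theorem two_distinct_qEig_iff_complete {n : ℕ} (hn : 2 ≤ n)
    (G : SimpleGraph (Fin n)) [DecidableRel G.Adj] (hconn : G.Connected) :
    (Finset.univ.image (qEig G)).card = 2 ↔ Nonempty (G ≃g SimpleGraph.completeGraph (Fin n)) := by
  have hQ := signlessLaplacian_isHermitian G
  set Q := signlessLaplacian G with hQdef
  constructor
  · intro hcard
    obtain ⟨a, b, hab, himg⟩ := Finset.card_eq_two.mp hcard
    have hroots : ∀ i, (qEig G i - a) * (qEig G i - b) = 0 := by
      intro i
      have hmem : qEig G i ∈ Finset.univ.image (qEig G) :=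
        Finset.mem_image_of_mem _ (Finset.mem_univ i)
      rw [himg, Finset.mem_insert, Finset.mem_singleton] at hmem
      rcases hmem with h | h <;> rw [h] <;> ring
    have hM : (Q - a • 1) * (Q - b • 1) = 0 := quad_eq_zero hQ a b hroots
    have hE : Q * Q - (a + b) • Q + (a * b) • 1 = 0 := by
      rw [← hM]
      rw [Matrix.sub_mul, Matrix.mul_sub, Matrix.mul_sub, Matrix.smul_mul, Matrix.mul_smul,
        Matrix.mul_smul, Matrix.one_mul, Matrix.mul_one, Matrix.mul_one]
      module
    -- no common neighbor of nonadjacent vertices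
    have hQ2 : ∀ u v, ¬G.Adj u v → u ≠ v → ∀ w, ¬(G.Adj u w ∧ G.Adj w v) := by
      intro u v hnadj huv w ⟨huw, hwv⟩
      have hQuv : Q u v = 0 := by
        rw [hQdef, Q_apply]; simp [huv, hnadj]
      have hentry := congr_fun (congr_fun hE u) v
      simp only [Matrix.add_apply, Matrix.sub_apply, Matrix.smul_apply, Matrix.zero_apply,
        Matrix.one_apply_ne huv, smul_eq_mul, mul_zero, hQuv, sub_zero, add_zero] at hentry
      have hsum : ∑ k, Q u k * Q k v = 0 := by
        have := hentry
        rw [Matrix.mul_apply] at this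
        linarith
      have hterm : ∀ k ∈ Finset.univ, Q u k * Q k v = 0 :=
        (Finset.sum_eq_zero_iff_of_nonneg
          (fun k _ => mul_nonneg (Q_nonneg G u k) (Q_nonneg G k v))).mp hsum
      have hw := hterm w (Finset.mem_univ w)
      have h1 : Q u w = 1 := by
        rw [hQdef, Q_apply]; simp [G.ne_of_adj huw, huw]
      have h2 : Q w v = 1 := by
        rw [hQdef, Q_apply]; simp [G.ne_of_adj hwv, hwv]
      rw [h1, h2] at hw
      norm_num at hw
    have hcomplete : ∀ u v : Fin n, u ≠ v → G.Adj u v := by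
      intro u v huv
      obtain ⟨p⟩ := hconn.preconnected u v
      have : u = v ∨ G.Adj u v := by
        clear huv
        induction p with
        | nil => exact Or.inl rfl
        | @cons x y z h p ih =>
          rcases ih with rfl | hyz
          · exact Or.inr h
          · by_cases hxz : x = z
            · exact Or.inl hxz
            · by_contra hc
              push_neg at hc
              exact hQ2 x z hc.2 hxz y ⟨h, hyz⟩
      exact this.resolve_left huv
    refine ⟨⟨Equiv.refl _, ?_⟩⟩
    intro a b
    show a ≠ b ↔ G.Adj a b
    exact ⟨hcomplete a b, fun h => G.ne_of_adj h⟩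
  · rintro ⟨e⟩
    have hAdj : ∀ u v : Fin n, G.Adj u v ↔ u ≠ v := by
      intro u v
      constructor
      · exact G.ne_of_adj
      · intro h
        apply e.map_rel_iff.mp
        show e u ≠ e v
        exact fun hc => h (e.toEquiv.injective hc)
    have hn0 : (n : ℝ) ≠ 0 := by positivity
    have hnR : (2 : ℝ) ≤ n := by exact_mod_cast hn
    have hdeg : ∀ v : Fin n, (G.degree v : ℝ) = n - 1 := by
      intro v
      have : G.neighborFinset v = Finset.univ.erase v := by
        ext u
        simp [SimpleGraph.mem_neighborFinset, hAdj, ne_comm]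
      rw [SimpleGraph.degree, this, Finset.card_erase_of_mem (Finset.mem_univ v),
        Finset.card_univ, Fintype.card_fin]
      push_cast [Nat.cast_sub (by omega : 1 ≤ n)]
      ring
    have hQe : ∀ u v : Fin n, Q u v = if u = v then (n : ℝ) - 1 else 1 := by
      intro u v
      rw [hQdef, Q_apply]
      rcases eq_or_ne u v with rfl | huv
      · simp [G.irrefl, hdeg]
      · simp [huv, (hAdj u v).mpr huv]
    have hM : (Q - ((n : ℝ) - 2) • 1) * (Q - (2 * (n : ℝ) - 2) • 1) = 0 := by
      have h1 : ∀ x y : Fin n, (Q - ((n : ℝ) - 2) • 1) x y = 1 := by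
        intro x y
        simp only [Matrix.sub_apply, Matrix.smul_apply, Matrix.one_apply, hQe, smul_eq_mul]
        split_ifs <;> ring
      have h2 : ∀ x y : Fin n, (Q - (2 * (n : ℝ) - 2) • 1) x y
          = 1 + (if x = y then -(n:ℝ) else 0) := by
        intro x y
        simp only [Matrix.sub_apply, Matrix.smul_apply, Matrix.one_apply, hQe, smul_eq_mul]
        split_ifs <;> ring
      ext u v
      rw [Matrix.mul_apply, Matrix.zero_apply]
      simp only [h1, h2, one_mul]
      rw [Finset.sum_add_distrib, Finset.sum_const, Finset.sum_ite_eq' Finset.univ v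
        (fun _ => -(n:ℝ))]
      simp [Finset.card_univ]
    have hqe : qEig G = hQ.eigenvalues := rfl
    have hroots : ∀ i, qEig G i = (n : ℝ) - 2 ∨ qEig G i = 2 * (n : ℝ) - 2 := by
      intro i
      rw [hqe]
      have := eig_root hQ _ _ hM i
      rcases mul_eq_zero.mp this with h | h
      · exact Or.inl (by linarith [sub_eq_zero.mp h])
      · exact Or.inr (by linarith [sub_eq_zero.mp h])
    have ht : ∑ i, qEig G i = n * ((n : ℝ) - 1) := by
      have := trace_eq_sum_eig hQ
      rw [hqe, ← this, Matrix.trace]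
      simp only [Matrix.diag_apply, hQe, if_pos rfl]
      rw [Finset.sum_const, Finset.card_univ, Fintype.card_fin, nsmul_eq_mul]
      norm_num
    set s := Finset.univ.image (qEig G) with hs
    have hsub : s ⊆ {(n : ℝ) - 2, 2 * (n : ℝ) - 2} := by
      intro x hx
      rw [hs, Finset.mem_image] at hx
      obtain ⟨i, _, rfl⟩ := hx
      rcases hroots i with h | h <;> simp [h]
    have hle : s.card ≤ 2 := (Finset.card_le_card hsub).trans
      ((Finset.card_insert_le _ _).trans (by simp))
    have hpos : 0 < s.card := by
      apply Finset.card_pos.mpr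
      exact ⟨qEig G ⟨0, by omega⟩, Finset.mem_image_of_mem _ (Finset.mem_univ _)⟩
    have hne1 : s.card ≠ 1 := by
      intro h1
      obtain ⟨c, hc⟩ := Finset.card_eq_one.mp h1
      have hall : ∀ i, qEig G i = c := by
        intro i
        have : qEig G i ∈ s := Finset.mem_image_of_mem _ (Finset.mem_univ i)
        rw [hc, Finset.mem_singleton] at this
        exact this
      have hsum : ∑ i, qEig G i = n * c := by
        simp [hall, Finset.card_univ]
      have hcval : c = (n : ℝ) - 1 := by
        rw [ht] at hsum
        have := mul_left_cancel₀ hn0 hsum.symm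
        linarith
      rcases hroots ⟨0, by omega⟩ with h | h <;> rw [hall _, hcval] at h <;> linarith
    omega
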